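/- Let F₀ be a field of characteristic 0 with normalized discrete valuation v, valuation ring O₀, uniformizer π₀, and residue field of characteristic 2 (so v(2) ≥ 1). Let F := F₀[X]/(X² + π₀) (a field, since X² + π₀ is Eisenstein over O₀), let π be the class of X, let σ be the nontrivial F₀-automorphism of F (so σ(π) = −π), and let N_{F/F₀}(λ) := λ·σ(λ) ∈ F₀ be the norm. Then for every λ ∈ F with λ + σ(λ) = 1 one has v(N_{F/F₀}(λ)) ≤ −2·v(2); moreover λ₀ := 1/2 satisfies λ₀ + σ(λ₀) = 1 and v(N_{F/F₀}(λ₀)) = −2·v(2). -/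

import Mathlib

open Polynomial

/-- **(R-P) case of the Lemma on λ.**  Let `F₀` be a field of characteristic `0`
with a normalized discrete valuation `v`, valuation ring `O₀`, uniformizer `π₀` (so `v π₀ = 1`),
and residue field of characteristic `2` (so `v 2 ≥ 1`).  Let `F := F₀[X]/(X² + π₀)` (a field,
since `X² + π₀` is Eisenstein over `O₀`, hence irreducible), let `π` be the class of `X`, let
`σ` be the nontrivial `F₀`-automorphism of `F` (so `σ π = −π`), and `N(λ) = λ·σ(λ)` the norm.
Then every `λ ∈ F` with `λ + σ λ = 1` has `N(λ) ∈ F₀` with `v (N λ) ≤ −2·v 2`; moreover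
`λ₀ := 1/2` satisfies `λ₀ + σ λ₀ = 1` and `v (N λ₀) = −2·v 2`. -/
theorem stmt_4 (F₀ : Type*) [Field F₀] [CharZero F₀]
    (v : F₀ → ℤ)
    (hv_mul : ∀ a b : F₀, a ≠ 0 → b ≠ 0 → v (a * b) = v a + v b)
    (hv_add : ∀ a b : F₀, a ≠ 0 → b ≠ 0 → a + b ≠ 0 → min (v a) (v b) ≤ v (a + b))
    (π₀ : F₀) (hπ₀_ne : π₀ ≠ 0) (hπ₀ : v π₀ = 1)
    (h2 : 1 ≤ v 2)
    [hirr : Fact (Irreducible (X ^ 2 + C π₀ : Polynomial F₀))]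
    (σ : AdjoinRoot (X ^ 2 + C π₀ : Polynomial F₀) →ₐ[F₀]
        AdjoinRoot (X ^ 2 + C π₀ : Polynomial F₀))
    (hσ : σ (AdjoinRoot.root _) = -AdjoinRoot.root (X ^ 2 + C π₀ : Polynomial F₀)) :
    (∀ lam : AdjoinRoot (X ^ 2 + C π₀ : Polynomial F₀),
      lam + σ lam = 1 →
      ∃ c : F₀, algebraMap F₀ _ c = lam * σ lam ∧ v c ≤ -(2 * v 2)) ∧
    (((1 : AdjoinRoot (X ^ 2 + C π₀ : Polynomial F₀)) / 2) + σ ((1 : AdjoinRoot _) / 2) = 1 ∧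
      ∃ c : F₀,
        algebraMap F₀ _ c =
          ((1 : AdjoinRoot (X ^ 2 + C π₀ : Polynomial F₀)) / 2) * σ ((1 : AdjoinRoot _) / 2) ∧
        v c = -(2 * v 2)) := by
  classical
  set f : Polynomial F₀ := X ^ 2 + C π₀ with hfdef
  set R := AdjoinRoot f with hRdef
  set A : F₀ →+* R := algebraMap F₀ R with hAdef
  -- basic valuation facts
  have v1 : v 1 = 0 := by
    have h := hv_mul 1 1 one_ne_zero one_ne_zero
    simp only [one_mul] at h; omega
  have vneg1 : v (-1 : F₀) = 0 := by
    have h := hv_mul (-1) (-1) (by norm_num) (by norm_num)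
    norm_num at h; omega
  have vneg : ∀ x : F₀, x ≠ 0 → v (-x) = v x := by
    intro x hx
    have h := hv_mul (-1) x (by norm_num) hx
    rw [neg_one_mul] at h; omega
  have vhalf : v ((1:F₀)/2) = -v 2 := by
    have h := hv_mul 2 (1/2) two_ne_zero (by norm_num)
    norm_num at h; omega
  have vquarter : v ((1:F₀)/4) = -(2 * v 2) := by
    have h := hv_mul ((1:F₀)/2) (1/2) (by norm_num) (by norm_num)
    norm_num at h; omega
  -- addition with distinct valuations
  have key : ∀ x y : F₀, x ≠ 0 → y ≠ 0 → v x < v y → v (x + y) = v x := by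
    intro x y hx hy hlt
    have hxy : x + y ≠ 0 := by
      intro h
      have hxe : x = -y := eq_neg_of_add_eq_zero_left h
      rw [hxe, vneg y hy] at hlt; exact lt_irrefl _ hlt
    have h1 : min (v x) (v y) ≤ v (x + y) := hv_add _ _ hx hy hxy
    have h3 : min (v (x+y)) (v (-y)) ≤ v (x + y + -y) :=
      hv_add _ _ hxy (neg_ne_zero.mpr hy) (by simpa using hx)
    have hxe : x + y + -y = x := by ring
    rw [hxe, vneg y hy] at h3
    omega
  -- f facts
  have hmonic : f.Monic := monic_X_pow_add_C π₀ (by norm_num)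
  have hdeg : f.degree = 2 := by
    rw [hfdef]
    compute_degree!
  have hANe : Function.Injective A := A.injective
  have hroot : (AdjoinRoot.root f) ^ 2 = - A π₀ := by
    have h0 : AdjoinRoot.mk f (X ^ 2 + C π₀) = 0 := AdjoinRoot.mk_self
    rw [map_add, map_pow, AdjoinRoot.mk_X, AdjoinRoot.mk_C, ← AdjoinRoot.algebraMap_eq] at h0
    show (AdjoinRoot.root (X ^ 2 + C π₀)) ^ 2 = - algebraMap F₀ (AdjoinRoot (X ^ 2 + C π₀)) π₀
    linear_combination h0
  -- representation
  have hrep : ∀ lam : R, ∃ a b : F₀, lam = A a + A b * AdjoinRoot.root f := by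
    intro lam
    obtain ⟨g, rfl⟩ := AdjoinRoot.mk_surjective lam
    refine ⟨(g %ₘ f).coeff 0, (g %ₘ f).coeff 1, ?_⟩
    have hle : (g %ₘ f).degree ≤ 1 := by
      have := degree_modByMonic_lt g hmonic
      rw [hdeg] at this
      exact Order.le_of_lt_succ (by exact_mod_cast this)
    have hg : AdjoinRoot.mk f g = AdjoinRoot.mk f (g %ₘ f) := by
      conv_lhs => rw [← modByMonic_add_div g f]
      rw [map_add, map_mul, AdjoinRoot.mk_self, zero_mul, add_zero]
    rw [hg]
    conv_lhs => rw [eq_X_add_C_of_degree_le_one hle]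
    rw [map_add, map_mul, AdjoinRoot.mk_X, AdjoinRoot.mk_C, AdjoinRoot.mk_C,
      ← AdjoinRoot.algebraMap_eq]
    ring
  -- sigma on representation
  have hsig : ∀ a b : F₀, σ (A a + A b * AdjoinRoot.root f) = A a - A b * AdjoinRoot.root f := by
    intro a b
    rw [map_add, map_mul, hσ]
    rw [σ.commutes, σ.commutes]
    ring
  -- norm computation
  have hnorm : ∀ a b : F₀,
      (A a + A b * AdjoinRoot.root f) * (A a - A b * AdjoinRoot.root f)
        = A (a ^ 2 + b ^ 2 * π₀) := by
    intro a b
    rw [map_add, map_mul, map_pow, map_pow]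
    linear_combination (-(A b) ^ 2) * hroot
  constructor
  · intro lam hlam
    obtain ⟨a, b, rfl⟩ := hrep lam
    rw [hsig a b] at hlam ⊢
    have ha : a = 1/2 := by
      have h1 : A (a + a) = A 1 := by
        rw [map_add, map_one]
        linear_combination hlam
      have := hANe h1
      linear_combination this / 2
    refine ⟨a ^ 2 + b ^ 2 * π₀, (hnorm a b).symm, ?_⟩
    have ha2 : a ^ 2 = 1/4 := by rw [ha]; norm_num
    rcases eq_or_ne b 0 with hb | hb
    · rw [hb, ha2]; norm_num
      omega
    · have hb2 : b ^ 2 ≠ 0 := pow_ne_zero 2 hb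
      have hvb : v (b ^ 2 * π₀) = v b + v b + 1 := by
        have h1 := hv_mul (b^2) π₀ hb2 hπ₀_ne
        have h2 := hv_mul b b hb hb
        rw [← sq] at h2
        omega
      rw [ha2]
      have hq : v ((1:F₀)/4) ≠ v (b^2 * π₀) := by omega
      rcases lt_or_gt_of_ne hq with h | h
      · rw [key _ _ (by norm_num) (mul_ne_zero hb2 hπ₀_ne) h]
        omega
      · rw [add_comm, key _ _ (mul_ne_zero hb2 hπ₀_ne) (by norm_num) h]
        omega
  · have hhalf : ((1 : R) / 2) = A (1/2) := by
      rw [map_div₀, map_one, map_ofNat]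
    have hs : σ ((1 : R) / 2) = A (1/2) := by
      rw [hhalf, σ.commutes]
    constructor
    · rw [hs, hhalf, ← map_add]
      norm_num
    · refine ⟨(1:F₀)/4, ?_, vquarter⟩
      rw [hs, hhalf, ← map_mul]
      norm_num
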